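/- For s ∈ ℂ with Re(s) > 1, the Riemann zeta function satisfies ζ(s) = 1 + ∑_{k=1}^{∞} a_k(s) · (p k)^(-s), where p k is the k-th prime and a_k(s) = ∏_{j=k}^{∞} (1 - (p j)^(-s))⁻¹. -/

import Mathlib

/-- `nthPrime k` is the k-th prime, indexed from 1 (so `nthPrime 1 = 2`). -/
noncomputable def nthPrime (k : ℕ) : ℕ := Nat.nth Nat.Prime (k - 1)

/-- `a k s = ∏_{j ≥ k} (1 - (p j)^(-s))⁻¹`, the tail product starting at the k-th prime. -/
noncomputable def a (k : ℕ) (s : ℂ) : ℂ :=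
  ∏' j : ℕ, (1 - (nthPrime (k + j) : ℂ) ^ (-s))⁻¹

open Complex Filter Topology

namespace ZetaTailAux

lemma prime_nth (n : ℕ) : (Nat.nth Nat.Prime n).Prime :=
  Nat.nth_mem_of_infinite Nat.infinite_setOf_prime n

lemma two_le_nth (n : ℕ) : (2 : ℝ) ≤ (Nat.nth Nat.Prime n : ℝ) := by
  exact_mod_cast (prime_nth n).two_le

/-- the `n`-th prime power term -/
noncomputable def q (s : ℂ) (n : ℕ) : ℂ := (Nat.nth Nat.Prime n : ℂ) ^ (-s)

lemma norm_q (s : ℂ) (hs : 1 < s.re) (n : ℕ) :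
    ‖q s n‖ = (Nat.nth Nat.Prime n : ℝ) ^ (-s.re) := by
  rw [q, norm_natCast_cpow_of_pos (prime_nth n).pos, neg_re]

lemma norm_q_lt_half (s : ℂ) (hs : 1 < s.re) (n : ℕ) : ‖q s n‖ < 1 / 2 := by
  rw [norm_q s hs n]
  calc (Nat.nth Nat.Prime n : ℝ) ^ (-s.re) ≤ (2 : ℝ) ^ (-s.re) := by
        apply Real.rpow_le_rpow_of_nonpos (by norm_num) (two_le_nth n) (by linarith)
    _ < (2 : ℝ) ^ (-1 : ℝ) := by
        apply Real.rpow_lt_rpow_of_exponent_lt (by norm_num) (by linarith)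
    _ = 1 / 2 := by norm_num [Real.rpow_neg_one]

lemma one_sub_q_ne (s : ℂ) (hs : 1 < s.re) (n : ℕ) : 1 - q s n ≠ 0 := by
  intro h
  have hq : q s n = 1 := by linear_combination -h
  have h2 := norm_q_lt_half s hs n
  rw [hq] at h2
  norm_num at h2

lemma arg_ne (s : ℂ) (hs : 1 < s.re) (n : ℕ) : (1 - q s n).arg ≠ Real.pi := by
  rw [Ne, Complex.arg_eq_pi_iff]
  rintro ⟨h1, -⟩
  have h2 : |(q s n).re| ≤ ‖q s n‖ := Complex.abs_re_le_norm _
  have h3 := norm_q_lt_half s hs n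
  have : (1 - q s n).re = 1 - (q s n).re := by simp
  rw [this] at h1
  have := abs_le.mp h2
  linarith [this.2]

/-- the `n`-th log term -/
noncomputable def L (s : ℂ) (n : ℕ) : ℂ := Complex.log (1 - q s n)⁻¹

lemma norm_L_le (s : ℂ) (hs : 1 < s.re) (n : ℕ) : ‖L s n‖ ≤ 3 / 2 * ‖q s n‖ := by
  rw [L, Complex.log_inv _ (arg_ne s hs n), norm_neg]
  have : (1 : ℂ) - q s n = 1 + -q s n := by ring
  rw [this]
  have := Complex.norm_log_one_add_half_le_self (z := -q s n)
    (by rw [norm_neg]; exact (norm_q_lt_half s hs n).le)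
  simpa using this

lemma summable_norm_q (s : ℂ) (hs : 1 < s.re) : Summable fun n => ‖q s n‖ := by
  have h : Summable (fun p : Nat.Primes => (p : ℝ) ^ (-s.re)) :=
    Nat.Primes.summable_rpow.mpr (by linarith)
  have he : Summable (fun n : ℕ =>
      ((⟨Nat.nth Nat.Prime n, prime_nth n⟩ : Nat.Primes) : ℝ) ^ (-s.re)) := by
    apply h.comp_injective
    intro m n h'
    exact Nat.nth_injective Nat.infinite_setOf_prime (by simpa using congrArg Subtype.val h')
  simpa [norm_q s hs] using he

lemma summable_norm_L (s : ℂ) (hs : 1 < s.re) : Summable fun n => ‖L s n‖ :=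
  Summable.of_nonneg_of_le (fun _ => norm_nonneg _) (norm_L_le s hs)
    ((summable_norm_q s hs).mul_left (3 / 2))

lemma summable_L (s : ℂ) (hs : 1 < s.re) : Summable (L s) :=
  (summable_norm_L s hs).of_norm

/-- the tail log sum -/
noncomputable def S (s : ℂ) (n : ℕ) : ℂ := ∑' j : ℕ, L s (j + n)

lemma summable_L_add (s : ℂ) (hs : 1 < s.re) (n : ℕ) : Summable fun j => L s (j + n) :=
  (summable_nat_add_iff n).mpr (summable_L s hs)

lemma a_eq_exp_S (s : ℂ) (hs : 1 < s.re) (n : ℕ) : a (n + 1) s = Complex.exp (S s n) := by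
  have key := (Complex.cexp_tsum_eq_tprod (ι := ℕ)
    (f := fun j => (1 - q s (j + n))⁻¹)
    (fun j => inv_ne_zero (one_sub_q_ne s hs (j + n)))
    (by
      have : (fun j => Complex.log (1 - q s (j + n))⁻¹) = fun j => L s (j + n) := rfl
      rw [this]; exact summable_L_add s hs n))
  have h1 : a (n + 1) s = ∏' j : ℕ, (1 - q s (j + n))⁻¹ := by
    rw [a]
    apply tprod_congr
    intro j
    have : nthPrime (n + 1 + j) = Nat.nth Nat.Prime (j + n) := by
      simp only [nthPrime]
      congr 1
      omega
    rw [this, q]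
  rw [h1, S]
  simpa [Function.comp, L] using key.symm

lemma S_rec (s : ℂ) (hs : 1 < s.re) (n : ℕ) : S s n = L s n + S s (n + 1) := by
  have h := Summable.tsum_eq_zero_add (summable_L_add s hs n)
  simp only [S]
  rw [h]
  congr 1
  · simp
  · apply tsum_congr; intro j; congr 1; omega

lemma a_rec (s : ℂ) (hs : 1 < s.re) (n : ℕ) :
    a (n + 1) s = (1 - q s n)⁻¹ * a (n + 2) s := by
  rw [a_eq_exp_S s hs n, a_eq_exp_S s hs (n + 1), S_rec s hs n, Complex.exp_add]
  congr 1
  rw [L, Complex.exp_log (inv_ne_zero (one_sub_q_ne s hs n))]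

lemma term_eq (s : ℂ) (hs : 1 < s.re) (n : ℕ) :
    a (n + 1) s * q s n = a (n + 1) s - a (n + 2) s := by
  have h := a_rec s hs n
  have h2 : a (n + 2) s = (1 - q s n) * a (n + 1) s := by
    rw [h, ← mul_assoc, mul_inv_cancel₀ (one_sub_q_ne s hs n), one_mul]
  rw [h2]
  ring

lemma tendsto_a_one (s : ℂ) (hs : 1 < s.re) :
    Tendsto (fun n => a (n + 1) s) atTop (𝓝 1) := by
  have hS : Tendsto (S s) atTop (𝓝 0) := tendsto_sum_nat_add (L s)
  have := (Complex.continuous_exp.tendsto 0).comp hS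
  simp only [Function.comp, Complex.exp_zero] at this
  apply this.congr
  intro n
  exact (a_eq_exp_S s hs n).symm

lemma norm_a_le (s : ℂ) (hs : 1 < s.re) (n : ℕ) :
    ‖a (n + 1) s‖ ≤ Real.exp (∑' j, ‖L s j‖) := by
  rw [a_eq_exp_S s hs n, Complex.norm_exp]
  apply Real.exp_le_exp.mpr
  have h1 : (S s n).re ≤ ‖S s n‖ := Complex.re_le_norm _
  refine h1.trans ?_
  have h2 : ‖S s n‖ ≤ ∑' j, ‖L s (j + n)‖ := norm_tsum_le_tsum_norm
    ((summable_nat_add_iff n).mpr (summable_norm_L s hs))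
  refine h2.trans ?_
  have h3 := Summable.sum_add_tsum_nat_add (f := fun j => ‖L s j‖) n (summable_norm_L s hs)
  have h4 : 0 ≤ ∑ i ∈ Finset.range n, ‖L s i‖ :=
    Finset.sum_nonneg fun _ _ => norm_nonneg _
  linarith

lemma summable_terms (s : ℂ) (hs : 1 < s.re) :
    Summable fun n => a (n + 1) s * q s n := by
  apply Summable.of_norm_bounded (g := fun n => Real.exp (∑' j, ‖L s j‖) * ‖q s n‖)
    ((summable_norm_q s hs).mul_left _)
  intro n
  rw [norm_mul]
  exact mul_le_mul_of_nonneg_right (norm_a_le s hs n) (norm_nonneg _)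

noncomputable def primesEquiv : ℕ ≃ Nat.Primes :=
  { toFun := fun n => ⟨Nat.nth Nat.Prime n, prime_nth n⟩
    invFun := fun p => Nat.count Nat.Prime p
    left_inv := fun n => Nat.count_nth_of_infinite Nat.infinite_setOf_prime n
    right_inv := fun p => Subtype.ext (Nat.nth_count p.2) }

lemma a_one_eq_zeta (s : ℂ) (hs : 1 < s.re) : a 1 s = riemannZeta s := by
  rw [← riemannZeta_eulerProduct_tprod hs,
    ← primesEquiv.tprod_eq fun p : Nat.Primes => (1 - (p : ℂ) ^ (-s))⁻¹, a]
  apply tprod_congr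
  intro n
  have h : nthPrime (1 + n) = Nat.nth Nat.Prime n := by
    simp only [nthPrime]
    congr 1
    omega
  rw [h]
  rfl

end ZetaTailAux

open ZetaTailAux in
theorem zeta_eq_one_add_tsum (s : ℂ) (hs : 1 < s.re) :
    riemannZeta s = 1 + ∑' k : ℕ, a (k + 1) s * (nthPrime (k + 1) : ℂ) ^ (-s) := by
  have hq : ∀ k : ℕ, (nthPrime (k + 1) : ℂ) ^ (-s) = q s k := by
    intro k; simp [nthPrime, q]
  have hsum := summable_terms s hs
  have htend := hsum.hasSum.tendsto_sum_nat
  have htel : ∀ n : ℕ, ∑ k ∈ Finset.range n, a (k + 1) s * q s k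
      = a 1 s - a (n + 1) s := by
    intro n
    calc ∑ k ∈ Finset.range n, a (k + 1) s * q s k
        = ∑ k ∈ Finset.range n, (a (k + 1) s - a (k + 2) s) :=
          Finset.sum_congr rfl fun k _ => term_eq s hs k
      _ = a 1 s - a (n + 1) s := by
          have := Finset.sum_range_sub' (fun k => a (k + 1) s) n
          simpa using this
  have htend2 : Tendsto (fun n => ∑ k ∈ Finset.range n, a (k + 1) s * q s k) atTop
      (𝓝 (a 1 s - 1)) := by
    simp only [htel]
    exact tendsto_const_nhds.sub (tendsto_a_one s hs)
  have hval : ∑' k : ℕ, a (k + 1) s * q s k = a 1 s - 1 :=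
    tendsto_nhds_unique htend htend2
  have : ∑' k : ℕ, a (k + 1) s * (nthPrime (k + 1) : ℂ) ^ (-s)
      = ∑' k : ℕ, a (k + 1) s * q s k := tsum_congr fun k => by rw [hq k]
  rw [this, hval, a_one_eq_zeta s hs]
  ring
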